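/- arXiv:1708.02116 — 2 statements merged into one kernel-verified Lean document; each statement's English description precedes it below -/
import Mathlib

section
/- Let {a_ℓ}_{ℓ=1}^Q and {b_ℓ}_{ℓ=1}^Q be two families of non-negative real numbers. Suppose there exists a sequence of natural numbers k_i → ∞ such that ∑_{ℓ=1}^Q a_ℓ^{k_i} = ∑_{ℓ=1}^Q b_ℓ^{k_i} for all i. Then the two families coincide as multisets, i.e. there is a permutation σ of {1,…,Q} with b_ℓ = a_{σ(ℓ)} for all ℓ. -/
open Filter Topology

private lemma multiset_sum_tendsto (f : ℕ → ℝ → ℝ) (g : ℝ → ℝ) (s : Multiset ℝ)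
    (h : ∀ x ∈ s, Tendsto (fun i => f i x) atTop (𝓝 (g x))) :
    Tendsto (fun i => (s.map (f i)).sum) atTop (𝓝 ((s.map g).sum)) := by
  induction s using Multiset.induction_on with
  | empty => simpa using tendsto_const_nhds
  | cons x s ih =>
    simp only [Multiset.map_cons, Multiset.sum_cons]
    exact (h x (Multiset.mem_cons_self x s)).add
      (ih fun y hy => h y (Multiset.mem_cons_of_mem hy))

private lemma sum_indicator_count (s : Multiset ℝ) (M : ℝ) :
    (s.map (fun x => if x = M then (1:ℝ) else 0)).sum = s.count M := by
  induction s using Multiset.induction_on with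
  | empty => simp
  | cons x s ih =>
    simp only [Multiset.map_cons, Multiset.sum_cons, ih, Multiset.count_cons]
    by_cases h : x = M
    · simp [h, add_comm]
    · have h' : ¬ M = x := fun h'' => h h''.symm
      simp [h, h']

private lemma key_multiset (k : ℕ → ℕ) (hk : StrictMono k) :
    ∀ n (s t : Multiset ℝ), s.card = n → t.card = n →
      (∀ x ∈ s, 0 ≤ x) → (∀ x ∈ t, 0 ≤ x) →
      (∀ i, (s.map (· ^ k i)).sum = (t.map (· ^ k i)).sum) → s = t := by
  intro n
  induction n with
  | zero =>
    intro s t hs ht _ _ _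
    rw [Multiset.card_eq_zero] at hs ht
    rw [hs, ht]
  | succ n ih =>
    intro s t hs ht hsn htn hsum
    have hsne : s ≠ 0 := by
      intro h; rw [h] at hs; simp at hs
    have hne : (s + t).toFinset.Nonempty := by
      rw [Multiset.toFinset_nonempty]
      intro h
      have := congrArg Multiset.card h
      simp [hs] at this
    set M := (s + t).toFinset.max' hne with hMdef
    have hMmem : M ∈ s + t := Multiset.mem_toFinset.1 ((s + t).toFinset.max'_mem hne)
    have hMub : ∀ x ∈ s + t, x ≤ M := fun x hx =>
      Finset.le_max' _ x (Multiset.mem_toFinset.2 hx)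
    have hM0 : 0 ≤ M := by
      rcases Multiset.mem_add.1 hMmem with h | h
      exacts [hsn _ h, htn _ h]
    rcases hM0.eq_or_lt with h0 | hMpos
    · -- all elements are zero
      have hszero : ∀ x ∈ s, x = 0 := fun x hx =>
        le_antisymm (h0 ▸ hMub x (Multiset.mem_add.2 (Or.inl hx))) (hsn x hx)
      have htzero : ∀ x ∈ t, x = 0 := fun x hx =>
        le_antisymm (h0 ▸ hMub x (Multiset.mem_add.2 (Or.inr hx))) (htn x hx)
      have h1 : s = Multiset.replicate s.card (0:ℝ) :=
        (Multiset.eq_replicate_card).2 hszero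
      have h2 : t = Multiset.replicate t.card (0:ℝ) :=
        (Multiset.eq_replicate_card).2 htzero
      rw [h1, h2, hs, ht]
    · -- count the maximum via limits
      have hklim : Tendsto k atTop atTop := hk.tendsto_atTop
      have tends : ∀ (u : Multiset ℝ), (∀ x ∈ u, 0 ≤ x) → (∀ x ∈ u, x ≤ M) →
          Tendsto (fun i => (u.map (· ^ k i)).sum / M ^ k i) atTop (𝓝 (u.count M)) := by
        intro u hu0 huM
        have hEq : ∀ i, (u.map (fun x => (x / M) ^ k i)).sum
            = (u.map (· ^ k i)).sum / M ^ k i := by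
          intro i
          have : (fun x : ℝ => (x / M) ^ k i) = fun x => x ^ k i * (M ^ k i)⁻¹ := by
            funext x; rw [div_pow, div_eq_mul_inv]
          rw [this, Multiset.sum_map_mul_right, div_eq_mul_inv]
        have := multiset_sum_tendsto (fun i x => (x / M) ^ k i)
            (fun x => if x = M then (1:ℝ) else 0) u ?_
        · rw [sum_indicator_count] at this
          exact (funext hEq) ▸ this
        · intro x hx
          by_cases hxM : x = M
          · simp only [hxM, if_pos rfl, div_self hMpos.ne', one_pow]
            exact tendsto_const_nhds
          · simp only [if_neg hxM]
            have h1 : 0 ≤ x / M := div_nonneg (hu0 x hx) hM0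
            have h2 : x / M < 1 := (div_lt_one hMpos).2 ((huM x hx).lt_of_ne hxM)
            exact (tendsto_pow_atTop_nhds_zero_of_lt_one h1 h2).comp hklim
      have hts : Tendsto (fun i => (s.map (· ^ k i)).sum / M ^ k i) atTop (𝓝 (s.count M)) :=
        tends s hsn (fun x hx => hMub x (Multiset.mem_add.2 (Or.inl hx)))
      have htt : Tendsto (fun i => (s.map (· ^ k i)).sum / M ^ k i) atTop (𝓝 (t.count M)) := by
        have := tends t htn (fun x hx => hMub x (Multiset.mem_add.2 (Or.inr hx)))
        simpa only [← hsum] using this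
      have hcountR : (s.count M : ℝ) = t.count M := tendsto_nhds_unique hts htt
      have hcount : s.count M = t.count M := Nat.cast_injective hcountR
      have hcpos : 0 < s.count M := by
        rcases Multiset.mem_add.1 hMmem with h | h
        · exact Multiset.count_pos.2 h
        · rw [hcount]; exact Multiset.count_pos.2 h
      have hMs : M ∈ s := Multiset.count_pos.1 hcpos
      have hMt : M ∈ t := Multiset.count_pos.1 (hcount ▸ hcpos)
      have hes : s = M ::ₘ s.erase M := (Multiset.cons_erase hMs).symm
      have het : t = M ::ₘ t.erase M := (Multiset.cons_erase hMt).symm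
      have hcard_s : (s.erase M).card = n := by
        rw [Multiset.card_erase_of_mem hMs, hs]; rfl
      have hcard_t : (t.erase M).card = n := by
        rw [Multiset.card_erase_of_mem hMt, ht]; rfl
      have herased : s.erase M = t.erase M := by
        apply ih _ _ hcard_s hcard_t
        · exact fun x hx => hsn x (Multiset.mem_of_mem_erase hx)
        · exact fun x hx => htn x (Multiset.mem_of_mem_erase hx)
        · intro i
          have h := hsum i
          rw [hes, het] at h
          simp only [Multiset.map_cons, Multiset.sum_cons] at h
          exact add_left_cancel h
      rw [hes, het, herased]

theorem stmt_0 (Q : ℕ) (hQ : 0 < Q) (a b : Fin Q → ℝ)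
    (ha : ∀ ℓ, 0 ≤ a ℓ) (hb : ∀ ℓ, 0 ≤ b ℓ)
    (k : ℕ → ℕ) (hk : StrictMono k)
    (heq : ∀ i, ∑ ℓ, a ℓ ^ k i = ∑ ℓ, b ℓ ^ k i) :
    ∃ σ : Equiv.Perm (Fin Q), ∀ ℓ, b ℓ = a (σ ℓ) := by
  have hms : ((List.ofFn a : Multiset ℝ)) = (List.ofFn b : Multiset ℝ) := by
    apply key_multiset k hk Q
    · simp
    · simp
    · intro x hx
      obtain ⟨i, rfl⟩ := List.mem_ofFn.1 hx
      exact ha i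
    · intro x hx
      obtain ⟨i, rfl⟩ := List.mem_ofFn.1 hx
      exact hb i
    · intro i
      have h := heq i
      simpa [Multiset.sum_coe, List.map_ofFn, List.sum_ofFn, Function.comp] using h
  have hperm : (List.ofFn a).Perm (List.ofFn b) := Multiset.coe_eq_coe.1 hms
  have h1 : Monotone (a ∘ Tuple.sort a) := Tuple.monotone_sort a
  have h2 : Monotone (b ∘ Tuple.sort b) := Tuple.monotone_sort b
  have hsorted : a ∘ Tuple.sort a = b ∘ Tuple.sort b := by
    apply List.ofFn_injective
    refine List.Perm.eq_of_sortedLE h1.sortedLE_ofFn h2.sortedLE_ofFn ?_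
    exact ((Tuple.sort a).ofFn_comp_perm a).trans
      (hperm.trans ((Tuple.sort b).ofFn_comp_perm b).symm)
  refine ⟨((Tuple.sort b)⁻¹).trans (Tuple.sort a), fun ℓ => ?_⟩
  have := congrFun hsorted ((Tuple.sort b)⁻¹ ℓ)
  simp only [Function.comp_apply] at this
  simpa [Equiv.trans_apply] using this.symm
end

section
/- Let y₀,…,y_k ∈ B₁(0) ⊂ ℝ^m be points which ρ-effectively span a k-dimensional affine subspace, i.e. dist(y_i, y₀ + span[y₁-y₀,…,y_{i-1}-y₀]) ≥ 2ρ for all i = 1,…,k. Then for every point x ∈ y₀ + span[y₁-y₀,…,y_k-y₀] there exists a unique choice of coefficients α₁,…,α_k ∈ ℝ with x = y₀ + ∑ α_i (y_i - y₀) and |α_i| ≤ C(m,ρ)|x - y₀| for a constant C depending only on m and ρ. -/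
open Metric

/-- The points `y 0, …, y k ∈ ℝ^m` `ρ`-effectively span a `k`-dimensional affine subspace:
`dist(y i, y 0 + span[y 1 - y 0, …, y (i-1) - y 0]) ≥ 2ρ` for every `i = 1, …, k`. -/
def effSpan {m : ℕ} (k : ℕ) (ρ : ℝ) (y : Fin (k+1) → EuclideanSpace ℝ (Fin m)) : Prop :=
  ∀ i : Fin (k+1), 0 < (i : ℕ) →
    2 * ρ ≤ infDist (y i)
      ((AffineSubspace.mk' (y 0) (Submodule.span ℝ
        ((fun j => y j - y 0) '' {j : Fin (k+1) | 0 < (j : ℕ) ∧ (j : ℕ) < (i : ℕ)}))) :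
        Set (EuclideanSpace ℝ (Fin m)))

theorem stmt_9 (m k : ℕ) (ρ : ℝ) (hρ : 0 < ρ) :
    ∃ C : ℝ, 0 < C ∧ ∀ y : Fin (k+1) → EuclideanSpace ℝ (Fin m),
      (∀ i, y i ∈ ball (0 : EuclideanSpace ℝ (Fin m)) 1) →
      effSpan k ρ y →
      ∀ x ∈ ((AffineSubspace.mk' (y 0) (Submodule.span ℝ
          (Set.range fun i : Fin k => y i.succ - y 0))) :
          Set (EuclideanSpace ℝ (Fin m))),
        (∃! α : Fin k → ℝ, x = y 0 + ∑ i, α i • (y i.succ - y 0)) ∧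
        (∀ α : Fin k → ℝ, x = y 0 + ∑ i, α i • (y i.succ - y 0) →
          ∀ i, |α i| ≤ C * ‖x - y 0‖) := by
  set E := EuclideanSpace ℝ (Fin m)
  refine ⟨(1 + 1/ρ)^k / (2*ρ), by positivity, ?_⟩
  intro y hball hes x hx
  set v : Fin k → E := fun i => y i.succ - y 0 with hv
  have hvnorm : ∀ i, ‖v i‖ ≤ 2 := by
    intro i
    have h1 := mem_ball_zero_iff.1 (hball i.succ)
    have h2 := mem_ball_zero_iff.1 (hball 0)
    calc ‖v i‖ ≤ ‖y i.succ‖ + ‖y 0‖ := norm_sub_le _ _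
      _ ≤ 2 := by linarith
  have key : ∀ n : ℕ, ∀ α : Fin k → ℝ, (∀ i : Fin k, n ≤ (i : ℕ) → α i = 0) →
      ∀ i, |α i| ≤ (1 + 1/ρ)^n / (2*ρ) * ‖∑ j, α j • v j‖ := by
    intro n
    induction n with
    | zero =>
      intro α h0 i
      simp only [h0 i (Nat.zero_le _), abs_zero]
      positivity
    | succ n ih =>
      intro α h0 i
      by_cases hn : n < k
      · set ι : Fin k := ⟨n, hn⟩ with hι
        set w := ∑ j, α j • v j with hw
        set W := Submodule.span ℝ (v '' {j : Fin k | (j : ℕ) < n}) with hW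
        have hdist : ∀ u ∈ W, 2 * ρ ≤ ‖v ι - u‖ := by
          intro u hu
          have hsets : ((fun j => y j - y 0) '' {j : Fin (k+1) | 0 < (j : ℕ) ∧ (j : ℕ) < ((ι.succ : Fin (k+1)) : ℕ)})
              = v '' {j : Fin k | (j : ℕ) < n} := by
            ext z
            constructor
            · rintro ⟨j, ⟨hj0, hjn⟩, rfl⟩
              have hj0' : j ≠ 0 := by
                intro h; rw [h] at hj0; simp at hj0
              refine ⟨j.pred hj0', ?_, ?_⟩
              · simp [Fin.coe_pred, Fin.val_succ] at hjn ⊢; have hιn : ((⟨n, hn⟩ : Fin k) : ℕ) = n := rfl; have h0v : ((0 : Fin (k+1)) : ℕ) = 0 := rfl; omega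
              · show y (j.pred hj0').succ - y 0 = y j - y 0
                rw [Fin.succ_pred]
            · rintro ⟨j, hj, rfl⟩
              exact ⟨j.succ, ⟨by simp, by simp [Fin.val_succ] at hj ⊢; omega⟩, rfl⟩
          have h := hes ι.succ (by simp)
          rw [hsets] at h
          have hmem : y 0 + u ∈ ((AffineSubspace.mk' (y 0) W) : Set E) := by
            have he : y 0 + u = u +ᵥ y 0 := by
              simp [vadd_eq_add]; abel
            rw [he]
            exact AffineSubspace.vadd_mem_mk' _ hu
          calc 2 * ρ ≤ infDist (y ι.succ) ((AffineSubspace.mk' (y 0) W) : Set E) := h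
            _ ≤ dist (y ι.succ) (y 0 + u) := infDist_le_dist_of_mem hmem
            _ = ‖v ι - u‖ := by rw [dist_eq_norm]; show _ = ‖y ι.succ - y 0 - u‖; congr 1; abel
        have hsplit : w = α ι • v ι + ∑ j ∈ Finset.univ.erase ι, α j • v j := by
          rw [hw, ← Finset.add_sum_erase _ _ (Finset.mem_univ ι)]
        set s := ∑ j ∈ Finset.univ.erase ι, α j • v j with hs
        have hsmem : s ∈ W := by
          refine Submodule.sum_mem _ ?_
          intro j hj
          rcases lt_trichotomy (j : ℕ) n with h | h | h
          · exact Submodule.smul_mem _ _ (Submodule.subset_span ⟨j, h, rfl⟩)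
          · exact absurd (Fin.ext h : j = ι) (Finset.ne_of_mem_erase hj)
          · rw [h0 j (by omega)]; simp
        have hαι : |α ι| * (2 * ρ) ≤ ‖w‖ := by
          by_cases hz : α ι = 0
          · simp only [hz, abs_zero, zero_mul]; positivity
          · have hvec : α ι • (v ι - -(α ι)⁻¹ • s) = w := by
              rw [neg_smul, sub_neg_eq_add, smul_add, smul_smul, mul_inv_cancel₀ hz, one_smul, hsplit]
            have hneq : ‖w‖ = |α ι| * ‖v ι - -(α ι)⁻¹ • s‖ := by
              rw [← hvec, norm_smul, Real.norm_eq_abs]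
            rw [hneq]
            exact mul_le_mul_of_nonneg_left (hdist _ (Submodule.smul_mem _ _ hsmem)) (abs_nonneg _)
        have hαι' : |α ι| ≤ ‖w‖ / (2 * ρ) := by
          rw [le_div_iff₀ (by positivity)]; exact hαι
        set α' := Function.update α ι 0 with hα'
        have hsum' : ∑ j, α' j • v j = s := by
          rw [← Finset.add_sum_erase _ (fun j => α' j • v j) (Finset.mem_univ ι), hs]
          have h1 : α' ι = 0 := Function.update_self _ _ _
          rw [h1, zero_smul, zero_add]
          exact Finset.sum_congr rfl fun j hj => by
            have : α' j = α j := Function.update_of_ne (Finset.ne_of_mem_erase hj) _ _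
            rw [this]
        have hsnorm : ‖s‖ ≤ (1 + 1/ρ) * ‖w‖ := by
          have hse : s = w - α ι • v ι := by rw [hsplit]; abel
          rw [hse]
          calc ‖w - α ι • v ι‖ ≤ ‖w‖ + ‖α ι • v ι‖ := norm_sub_le _ _
            _ ≤ ‖w‖ + |α ι| * 2 := by
                rw [norm_smul, Real.norm_eq_abs]
                have := hvnorm ι
                nlinarith [abs_nonneg (α ι)]
            _ ≤ ‖w‖ + (‖w‖ / (2*ρ)) * 2 := by nlinarith
            _ = (1 + 1/ρ) * ‖w‖ := by field_simp
        have ihb := ih α' (fun j hj => by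
          by_cases hji : j = ι
          · rw [hji]; exact Function.update_self _ _ _
          · rw [hα', Function.update_of_ne hji]
            have hjn : (j:ℕ) ≠ n := fun h => hji (Fin.ext h)
            exact h0 j (by omega)) i
        rw [hsum'] at ihb
        have hone : (1:ℝ) ≤ 1 + 1/ρ := by
          have := one_div_pos.2 hρ; linarith
        by_cases hiι : i = ι
        · calc |α i| = |α ι| := by rw [hiι]
            _ ≤ ‖w‖ / (2*ρ) := hαι'
            _ = 1 / (2*ρ) * ‖w‖ := by ring
            _ ≤ (1 + 1/ρ)^(n+1) / (2*ρ) * ‖w‖ := by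
                have h1 : (1:ℝ) ≤ (1 + 1/ρ)^(n+1) := one_le_pow₀ hone
                gcongr
        · have : α' i = α i := Function.update_of_ne hiι _ _
          rw [this] at ihb
          calc |α i| ≤ (1 + 1/ρ)^n / (2*ρ) * ‖s‖ := ihb
            _ ≤ (1 + 1/ρ)^n / (2*ρ) * ((1 + 1/ρ) * ‖w‖) := by
                apply mul_le_mul_of_nonneg_left hsnorm (by positivity)
            _ = (1 + 1/ρ)^(n+1) / (2*ρ) * ‖w‖ := by ring
      · have := ih α (fun j _ => h0 j (by omega)) i
        calc |α i| ≤ (1 + 1/ρ)^n / (2*ρ) * ‖∑ j, α j • v j‖ := this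
          _ ≤ (1 + 1/ρ)^(n+1) / (2*ρ) * ‖∑ j, α j • v j‖ := by
              apply mul_le_mul_of_nonneg_right _ (norm_nonneg _)
              apply div_le_div_of_nonneg_right _ (by positivity)
              have hone : (1:ℝ) ≤ 1 + 1/ρ := by
                have := one_div_pos.2 hρ; linarith
              exact pow_le_pow_right₀ hone (Nat.le_succ n)
          _ = _ := rfl
  -- vacuity of the support condition at level k
  have keyk : ∀ α : Fin k → ℝ, ∀ i, |α i| ≤ (1 + 1/ρ)^k / (2*ρ) * ‖∑ j, α j • v j‖ :=
    fun α i => key k α (fun j hj => absurd hj (Nat.not_le.2 j.isLt)) i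
  -- existence
  have hxmem : x - y 0 ∈ Submodule.span ℝ (Set.range v) := by
    have := AffineSubspace.mem_mk'.1 hx
    simpa [vsub_eq_sub] using this
  obtain ⟨c, hc⟩ := (Submodule.mem_span_range_iff_exists_fun ℝ).1 hxmem
  have hx0 : x = y 0 + ∑ i, c i • v i := by rw [hc]; abel
  constructor
  · refine ⟨c, hx0, ?_⟩
    intro β hβ
    have hsums : ∑ j, β j • v j = ∑ j, c j • v j :=
      add_left_cancel (hβ.symm.trans hx0)
    have hzero : ∑ j, (β j - c j) • v j = 0 := by
      simp only [sub_smul, Finset.sum_sub_distrib, hsums, sub_self]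
    funext i
    have := keyk (fun j => β j - c j) i
    rw [hzero] at this
    simp only [norm_zero, mul_zero] at this
    have h0 : |β i - c i| = 0 := le_antisymm this (abs_nonneg _)
    have := abs_eq_zero.1 h0
    linarith [sub_eq_zero.1 this]
  · intro α hα i
    have hs : ∑ j, α j • v j = x - y 0 := by rw [hα]; abel
    have := keyk α i
    rw [hs] at this
    exact this
end
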